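/- Let A be an n×n Hermitian matrix with m·I ≤ A ≤ M·I, 0 < m ≤ M, and let X, Y be n×k matrices with X*X = I, Y*Y = I, and X*Y = 0. Then (X*AY)(Y*AY)^{-1}(Y*AX) ≤ ((M−m)/(M+m))² · (X*AX) in the Loewner order. -/

import Mathlib

open Matrix
open scoped ComplexOrder


lemma wieL1 (m M p q a d : ℝ) (hm : 0 < m) (hmM : m ≤ M)
    (hp : 0 ≤ p) (hq : 0 ≤ q)
    (ha1 : m*p ≤ a) (hd1 : m*q ≤ d) (ha2 : a ≤ M*p) (hd2 : d ≤ M*q)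
    (hs : a*q + d*p ≤ (M+m)*(p*q)) :
    (M+m)^2*((a-m*p)*(d-m*q)) ≤ (M-m)^2*(a*d) := by
  have hM : 0 < M := hm.trans_le hmM
  rcases eq_or_lt_of_le hp with hp0 | hp0
  · have hap : a = 0 := le_antisymm (by nlinarith) (by nlinarith)
    rw [hap, ← hp0]
    ring_nf
    nlinarith [sq_nonneg (M+m), mul_nonneg hm.le hq]
  rcases eq_or_lt_of_le hq with hq0 | hq0
  · have hdq : d = 0 := le_antisymm (by nlinarith) (by nlinarith)
    rw [hdq, ← hq0]
    ring_nf
    nlinarith [sq_nonneg (M+m), mul_nonneg hm.le hp]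
  have hpq : 0 < p*q := mul_pos hp0 hq0
  have hs2 : 2*m*(p*q) ≤ a*q + d*p := by nlinarith
  have hMs : m*(M+m)*(p*q) ≤ M*(a*q+d*p) := by
    nlinarith [mul_nonneg (mul_nonneg (sub_nonneg.2 hmM) hm.le) hpq.le,
      mul_le_mul_of_nonneg_left hs2 hM.le]
  have hid : ((M-m)^2*(a*d) - (M+m)^2*((a-m*p)*(d-m*q))) * (p*q)
      = m*(M*(a*q-d*p)^2 + ((M+m)*(p*q) - (a*q+d*p))*(M*(a*q+d*p) - m*(M+m)*(p*q))) := by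
    ring
  have key : 0 ≤ ((M-m)^2*(a*d) - (M+m)^2*((a-m*p)*(d-m*q))) * (p*q) := by
    rw [hid]
    have t1 : 0 ≤ M*(a*q-d*p)^2 := mul_nonneg hM.le (sq_nonneg _)
    have t2 : 0 ≤ ((M+m)*(p*q) - (a*q+d*p))*(M*(a*q+d*p) - m*(M+m)*(p*q)) :=
      mul_nonneg (sub_nonneg.2 hs) (sub_nonneg.2 hMs)
    positivity
  nlinarith [key, hpq]

lemma wieKey (m M p q a d β : ℝ) (hm : 0 < m) (hmM : m ≤ M)
    (hp : 0 ≤ p) (hq : 0 ≤ q)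
    (ha1 : m*p ≤ a) (hd1 : m*q ≤ d) (ha2 : a ≤ M*p) (hd2 : d ≤ M*q)
    (hb1 : β ≤ (a-m*p)*(d-m*q)) (hb2 : β ≤ (M*p-a)*(M*q-d)) :
    (M+m)^2*β ≤ (M-m)^2*(a*d) := by
  rcases le_or_gt (a*q + d*p) ((M+m)*(p*q)) with hs | hs
  · calc (M+m)^2*β ≤ (M+m)^2*((a-m*p)*(d-m*q)) := by nlinarith [sq_nonneg (M+m)]
      _ ≤ (M-m)^2*(a*d) := wieL1 m M p q a d hm hmM hp hq ha1 hd1 ha2 hd2 hs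
  · have h := wieL1 m M p q ((M+m)*p - a) ((M+m)*q - d) hm hmM hp hq
      (by nlinarith) (by nlinarith) (by nlinarith) (by nlinarith) (by nlinarith)
    have had : ((M+m)*p - a)*((M+m)*q - d) ≤ a*d := by nlinarith
    calc (M+m)^2*β ≤ (M+m)^2*((M*p-a)*(M*q-d)) := by nlinarith [sq_nonneg (M+m)]
      _ = (M+m)^2*((((M+m)*p - a)-m*p)*(((M+m)*q - d)-m*q)) := by ring_nf
      _ ≤ (M-m)^2*(((M+m)*p - a)*((M+m)*q - d)) := h
      _ ≤ (M-m)^2*(a*d) := by nlinarith [sq_nonneg (M-m)]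
open Matrix
open scoped ComplexOrder

lemma herm_flip {N : ℕ} {B : Matrix (Fin N) (Fin N) ℂ} (hB : B.IsHermitian)
    (x y : Fin N → ℂ) : star y ⬝ᵥ (B *ᵥ x) = star (star x ⬝ᵥ (B *ᵥ y)) := by
  rw [star_dotProduct, star_mulVec, hB.eq, ← dotProduct_mulVec]

lemma cs_psd {N : ℕ} {B : Matrix (Fin N) (Fin N) ℂ} (hB : B.PosSemidef) (x y : Fin N → ℂ) :
    Complex.normSq (star x ⬝ᵥ (B *ᵥ y)) ≤
      (star x ⬝ᵥ (B *ᵥ x)).re * (star y ⬝ᵥ (B *ᵥ y)).re := by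
  set b := star x ⬝ᵥ (B *ᵥ y) with hb
  set P := (star x ⬝ᵥ (B *ᵥ x)).re with hP
  set Q := (star y ⬝ᵥ (B *ᵥ y)).re with hQ
  have hP0 : 0 ≤ P := hB.re_dotProduct_nonneg x
  have hQ0 : 0 ≤ Q := hB.re_dotProduct_nonneg y
  have key : ∀ t : ℝ, 0 ≤ P - 2*t*Complex.normSq b + t^2*Complex.normSq b*Q := by
    intro t
    set c : ℂ := -(t:ℂ) * (starRingEnd ℂ) b with hc
    have h0 := hB.re_dotProduct_nonneg (x + c • y)
    have expand : star (x + c • y) ⬝ᵥ (B *ᵥ (x + c • y))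
        = (star x ⬝ᵥ (B *ᵥ x)) + ((-(2*t*Complex.normSq b) : ℝ) : ℂ)
          + (((t^2*Complex.normSq b) : ℝ) : ℂ) * (star y ⬝ᵥ (B *ᵥ y)) := by
      have hflip : star y ⬝ᵥ (B *ᵥ x) = (starRingEnd ℂ) b := herm_flip hB.1 x y
      have hns : ((Complex.normSq b : ℝ) : ℂ) = (starRingEnd ℂ) b * b :=
        Complex.normSq_eq_conj_mul_self
      simp only [mulVec_add, mulVec_smul, star_add, star_smul, dotProduct_add,
        add_dotProduct, smul_dotProduct, dotProduct_smul, smul_eq_mul, ← hb, hflip]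
      rw [hc]
      simp only [Complex.star_def, _root_.map_mul, map_neg, Complex.conj_conj,
        Complex.conj_ofReal]
      push_cast
      rw [hns]
      ring
    rw [expand] at h0
    simp only [RCLike.re_to_complex, Complex.add_re, Complex.ofReal_re, Complex.mul_re, Complex.ofReal_im,
      zero_mul, sub_zero] at h0
    rw [← hP, ← hQ] at h0
    linarith
  rcases (Complex.normSq_nonneg b).eq_or_lt with hb0 | hb0
  · rw [← hb0]; positivity
  · have hbne : Complex.normSq b ≠ 0 := ne_of_gt hb0
    rcases eq_or_lt_of_le hQ0 with hQ1 | hQ1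
    · exfalso
      have hk := key ((P+1)/(2*Complex.normSq b))
      rw [← hQ1, mul_zero, add_zero] at hk
      have he : 2*((P+1)/(2*Complex.normSq b))*Complex.normSq b = P+1 := by
        field_simp
      linarith
    · have hQ1' : Q ≠ 0 := ne_of_gt hQ1
      have hk := key (1/Q)
      have he1 : (1/Q)^2*Complex.normSq b*Q = Complex.normSq b/Q := by
        field_simp [pow_two]
      have he2 : 2*(1/Q)*Complex.normSq b = 2*(Complex.normSq b/Q) := by ring
      rw [he1, he2] at hk
      have h5 : 0 ≤ P - Complex.normSq b / Q := by linarith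
      rw [sub_nonneg, div_le_iff₀ hQ1] at h5
      linarith

lemma smul_one_mulVec {N : ℕ} (r : ℝ) (z : Fin N → ℂ) :
    (r • (1 : Matrix (Fin N) (Fin N) ℂ)) *ᵥ z = r • z := by
  rw [smul_mulVec, one_mulVec]

lemma re_self_nonneg {N : ℕ} (z : Fin N → ℂ) : 0 ≤ (star z ⬝ᵥ z).re := by
  have := Matrix.PosSemidef.re_dotProduct_nonneg (Matrix.PosSemidef.one
    (R := ℂ) (n := Fin N)) z
  rwa [one_mulVec, RCLike.re_to_complex] at this

lemma wieVec {N : ℕ} (A : Matrix (Fin N) (Fin N) ℂ) (m M : ℝ) (hm : 0 < m) (hmM : m ≤ M)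
    (h1 : (A - m • (1 : Matrix (Fin N) (Fin N) ℂ)).PosSemidef)
    (h2 : ((M • (1 : Matrix (Fin N) (Fin N) ℂ)) - A).PosSemidef)
    (x v : Fin N → ℂ) (hxv : star x ⬝ᵥ v = 0) :
    (M+m)^2 * Complex.normSq (star x ⬝ᵥ (A *ᵥ v)) ≤
      (M-m)^2 * ((star x ⬝ᵥ (A *ᵥ x)).re * (star v ⬝ᵥ (A *ᵥ v)).re) := by
  set b := star x ⬝ᵥ (A *ᵥ v) with hb
  set p := (star x ⬝ᵥ x).re with hp
  set q := (star v ⬝ᵥ v).re with hq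
  set a := (star x ⬝ᵥ (A *ᵥ x)).re with ha
  set d := (star v ⬝ᵥ (A *ᵥ v)).re with hd
  have hp0 : 0 ≤ p := re_self_nonneg x
  have hq0 : 0 ≤ q := re_self_nonneg v
  -- quadratic forms of A - m•1 and M•1 - A
  have e1 : ∀ z w : Fin N → ℂ, star z ⬝ᵥ ((A - m • 1) *ᵥ w)
      = star z ⬝ᵥ (A *ᵥ w) - (m:ℂ) * (star z ⬝ᵥ w) := by
    intro z w
    rw [Matrix.sub_mulVec, dotProduct_sub, smul_one_mulVec, dotProduct_smul,
      Complex.real_smul]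
  have e2 : ∀ z w : Fin N → ℂ, star z ⬝ᵥ ((M • 1 - A) *ᵥ w)
      = (M:ℂ) * (star z ⬝ᵥ w) - star z ⬝ᵥ (A *ᵥ w) := by
    intro z w
    rw [Matrix.sub_mulVec, dotProduct_sub, smul_one_mulVec, dotProduct_smul,
      Complex.real_smul]
  have rxx : (star x ⬝ᵥ ((A - m • 1) *ᵥ x)).re = a - m * p := by
    rw [e1]; simp [Complex.sub_re, Complex.mul_re]; rfl
  have rvv : (star v ⬝ᵥ ((A - m • 1) *ᵥ v)).re = d - m * q := by
    rw [e1]; simp [Complex.sub_re, Complex.mul_re]; rfl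
  have rxx2 : (star x ⬝ᵥ ((M • 1 - A) *ᵥ x)).re = M * p - a := by
    rw [e2]; simp [Complex.sub_re, Complex.mul_re]; rfl
  have rvv2 : (star v ⬝ᵥ ((M • 1 - A) *ᵥ v)).re = M * q - d := by
    rw [e2]; simp [Complex.sub_re, Complex.mul_re]; rfl
  have cs1 := cs_psd h1 x v
  have cs2 := cs_psd h2 x v
  rw [rxx, rvv] at cs1
  rw [rxx2, rvv2] at cs2
  have bxv1 : star x ⬝ᵥ ((A - m • 1) *ᵥ v) = b := by rw [e1, hxv]; ring
  have bxv2 : star x ⬝ᵥ ((M • 1 - A) *ᵥ v) = -b := by rw [e2, hxv]; ring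
  rw [bxv1] at cs1
  rw [bxv2, Complex.normSq_neg] at cs2
  have ha1 : m * p ≤ a := by
    have := h1.re_dotProduct_nonneg x
    rw [RCLike.re_to_complex, rxx] at this; linarith
  have hd1 : m * q ≤ d := by
    have := h1.re_dotProduct_nonneg v
    rw [RCLike.re_to_complex, rvv] at this; linarith
  have ha2 : a ≤ M * p := by
    have := h2.re_dotProduct_nonneg x
    rw [RCLike.re_to_complex, rxx2] at this; linarith
  have hd2 : d ≤ M * q := by
    have := h2.re_dotProduct_nonneg v
    rw [RCLike.re_to_complex, rvv2] at this; linarith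
  have := wieKey m M p q a d (Complex.normSq b) hm hmM hp0 hq0 ha1 hd1 ha2 hd2 cs1 cs2
  nlinarith [this]

lemma dot_adj {N K : ℕ} (Y : Matrix (Fin N) (Fin K) ℂ) (z : Fin K → ℂ) (w : Fin N → ℂ) :
    star z ⬝ᵥ (Yᴴ *ᵥ w) = star (Y *ᵥ z) ⬝ᵥ w := by
  rw [star_mulVec, dotProduct_mulVec]

theorem operator_wielandt_inequality
    {n k : ℕ} (A : Matrix (Fin n) (Fin n) ℂ) (hA : A.IsHermitian)
    (m M : ℝ) (hm : 0 < m) (hmM : m ≤ M)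
    (h1 : (A - m • (1 : Matrix (Fin n) (Fin n) ℂ)).PosSemidef)
    (h2 : ((M • (1 : Matrix (Fin n) (Fin n) ℂ)) - A).PosSemidef)
    (X Y : Matrix (Fin n) (Fin k) ℂ)
    (hX : Xᴴ * X = 1) (hY : Yᴴ * Y = 1) (hXY : Xᴴ * Y = 0) :
    ((((M - m) / (M + m)) ^ 2) • (Xᴴ * A * X)
      - (Xᴴ * A * Y) * (Yᴴ * A * Y)⁻¹ * (Yᴴ * A * X)).PosSemidef := by
  have hMm : 0 < M + m := by linarith
  -- A is positive definite
  have hsplit : ∀ z : Fin n → ℂ, star z ⬝ᵥ (A *ᵥ z)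
      = star z ⬝ᵥ ((A - m • 1) *ᵥ z) + (m:ℂ) * (star z ⬝ᵥ z) := by
    intro z
    rw [Matrix.sub_mulVec, dotProduct_sub, smul_one_mulVec, dotProduct_smul,
      Complex.real_smul]
    ring
  have hApsd : A.PosSemidef := by
    refine Matrix.PosSemidef.of_dotProduct_mulVec_nonneg hA (fun z => ?_)
    rw [hsplit z]
    have hz2 : 0 ≤ star z ⬝ᵥ z := by
      have := (Matrix.PosSemidef.one (R := ℂ) (n := Fin n)).dotProduct_mulVec_nonneg z
      rwa [one_mulVec] at this
    exact add_nonneg (h1.dotProduct_mulVec_nonneg z) (mul_nonneg (by exact_mod_cast hm.le) hz2)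
  have hApos : A.PosDef := by
    refine Matrix.PosDef.of_dotProduct_mulVec_pos hA (fun z hz => ?_)
    rw [hsplit z]
    have hz2 : 0 < star z ⬝ᵥ z := by
      have := (Matrix.PosDef.one (R := ℂ) (n := Fin n)).dotProduct_mulVec_pos hz
      rwa [one_mulVec] at this
    exact add_pos_of_nonneg_of_pos (h1.dotProduct_mulVec_nonneg z)
      (mul_pos (by exact_mod_cast hm) hz2)
  -- W is positive definite
  set W : Matrix (Fin k) (Fin k) ℂ := Yᴴ * A * Y with hWdef
  have hWpd : W.PosDef := by
    refine Matrix.PosDef.of_dotProduct_mulVec_pos (isHermitian_conjTranspose_mul_mul Y hA) (fun z hz => ?_)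
    have hYz : Y *ᵥ z ≠ 0 := by
      intro h
      apply hz
      calc z = (Yᴴ * Y) *ᵥ z := by rw [hY, one_mulVec]
        _ = Yᴴ *ᵥ (Y *ᵥ z) := (mulVec_mulVec z Yᴴ Y).symm
        _ = 0 := by rw [h, mulVec_zero]
    have : star z ⬝ᵥ (W *ᵥ z) = star (Y *ᵥ z) ⬝ᵥ (A *ᵥ (Y *ᵥ z)) := by
      rw [hWdef, ← mulVec_mulVec, ← mulVec_mulVec, dot_adj]
    rw [this]
    exact hApos.dotProduct_mulVec_pos hYz
  have hWinv : W * W⁻¹ = 1 :=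
    mul_nonsing_inv _ ((Matrix.isUnit_iff_isUnit_det _).mp hWpd.isUnit)
  -- Hermitian-ness
  have hPH : (Xᴴ * A * Y)ᴴ = Yᴴ * A * X := by
    simp [conjTranspose_mul, hA.eq, Matrix.mul_assoc]
  have hT : ((Xᴴ * A * Y) * W⁻¹ * (Yᴴ * A * X)).PosSemidef := by
    rw [← hPH]
    exact (hWpd.inv.posSemidef).mul_mul_conjTranspose_same (Xᴴ * A * Y)
  have hH1 : ((((M - m) / (M + m)) ^ 2) • (Xᴴ * A * X)).IsHermitian := by
    show _ᴴ = _
    rw [conjTranspose_smul, star_trivial, (isHermitian_conjTranspose_mul_mul X hA).eq]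
  refine Matrix.PosSemidef.of_dotProduct_mulVec_nonneg (hH1.sub hT.isHermitian) (fun u => ?_)
  -- quadratic form computation
  set c2 : ℝ := ((M - m) / (M + m)) ^ 2 with hc2
  set x : Fin n → ℂ := X *ᵥ u with hx
  set w0 : Fin k → ℂ := W⁻¹ *ᵥ (Yᴴ *ᵥ (A *ᵥ x)) with hw0
  set v : Fin n → ℂ := Y *ᵥ w0 with hv
  have q1 : star u ⬝ᵥ ((Xᴴ * A * X) *ᵥ u) = star x ⬝ᵥ (A *ᵥ x) := by
    rw [← mulVec_mulVec, ← mulVec_mulVec, dot_adj, hx]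
  have q2 : star u ⬝ᵥ (((Xᴴ * A * Y) * W⁻¹ * (Yᴴ * A * X)) *ᵥ u)
      = star x ⬝ᵥ (A *ᵥ v) := by
    simp only [← mulVec_mulVec]
    rw [dot_adj]
  have horth : star x ⬝ᵥ v = 0 := by
    rw [hv, hx, ← dot_adj, mulVec_mulVec, hXY, zero_mulVec, dotProduct_zero]
  have hWw0 : W *ᵥ w0 = Yᴴ *ᵥ (A *ᵥ x) := by
    rw [hw0, mulVec_mulVec, hWinv, one_mulVec]
  have h3 : Yᴴ *ᵥ (A *ᵥ v) = Yᴴ *ᵥ (A *ᵥ x) := by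
    rw [hv, mulVec_mulVec, mulVec_mulVec, ← hWdef, hWw0]
  have hAvv : star v ⬝ᵥ (A *ᵥ v) = star v ⬝ᵥ (A *ᵥ x) := by
    conv_lhs => rw [hv]
    rw [← dot_adj, h3, dot_adj, ← hv]
  set b : ℂ := star x ⬝ᵥ (A *ᵥ v) with hb
  have hbconj : b = star (star v ⬝ᵥ (A *ᵥ x)) := herm_flip hA v x
  have hvnn : 0 ≤ star v ⬝ᵥ (A *ᵥ v) := hApsd.dotProduct_mulVec_nonneg v
  have hbre : b.re = (star v ⬝ᵥ (A *ᵥ v)).re ∧ b.im = 0 := by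
    rw [hbconj, ← hAvv]
    constructor
    · simp [Complex.star_def]
    · have := (Complex.nonneg_iff.mp hvnn).2
      simp [Complex.star_def, ← this]
  have hbre0 : 0 ≤ b.re := hbre.1 ▸ (Complex.nonneg_iff.mp hvnn).1
  have hq1nn : 0 ≤ star x ⬝ᵥ (A *ᵥ x) := hApsd.dotProduct_mulVec_nonneg x
  have hq1re : 0 ≤ (star x ⬝ᵥ (A *ᵥ x)).re := (Complex.nonneg_iff.mp hq1nn).1
  have hq1im : (star x ⬝ᵥ (A *ᵥ x)).im = 0 := (Complex.nonneg_iff.mp hq1nn).2.symm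
  -- the main scalar inequality
  have hwie := wieVec A m M hm hmM h1 h2 x v horth
  rw [← hb, ← hbre.1] at hwie
  have hns : Complex.normSq b = b.re ^ 2 := by
    rw [Complex.normSq_apply, hbre.2]; ring
  rw [hns] at hwie
  have hmain : b.re ≤ c2 * (star x ⬝ᵥ (A *ᵥ x)).re := by
    rcases hbre0.eq_or_lt with h0 | h0
    · rw [← h0]
      exact mul_nonneg (by positivity) hq1re
    · have hcancel : (M+m)^2 * b.re ≤ (M-m)^2 * (star x ⬝ᵥ (A *ᵥ x)).re := by
        nlinarith [hwie, h0]
      have hc2eq : c2 * (star x ⬝ᵥ (A *ᵥ x)).re * (M+m)^2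
          = (M-m)^2 * (star x ⬝ᵥ (A *ᵥ x)).re := by
        rw [hc2]; field_simp
      have hpos : (0:ℝ) < (M+m)^2 := by positivity
      nlinarith [hcancel, hc2eq, hpos, h0]
  -- conclude
  rw [Matrix.sub_mulVec, dotProduct_sub, smul_mulVec, dotProduct_smul, q1, q2]
  rw [Complex.nonneg_iff]
  constructor
  · simp only [Complex.sub_re, Complex.real_smul, Complex.mul_re, Complex.ofReal_re,
      Complex.ofReal_im, zero_mul, sub_zero]
    linarith [hmain]
  · simp only [Complex.sub_im, Complex.real_smul, Complex.mul_im, Complex.ofReal_re,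
      Complex.ofReal_im, zero_mul, add_zero, hq1im, mul_zero, hbre.2, sub_zero]
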